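/- arXiv:2510.09612 — 2 statements merged into one kernel-verified Lean document; each statement's English description precedes it below -/
import Mathlib

section
/- The inner product of sinc with its dilated-translated copies: for all n ∈ ℤ, ∫_ℝ sinc(x)·sinc(2x−n) dx = (1/2)·sinc(n/2), where sinc(t) = sin(πt)/(πt). -/
open MeasureTheory Real Complex

noncomputable def sinc (t : ℝ) : ℝ :=
  if t = 0 then 1 else Real.sin (Real.pi * t) / (Real.pi * t)

noncomputable def saftKernel (A B D p q : ℝ) (x ζ : ℝ) : ℂ :=
  ((2 * Real.pi * Complex.I * (B : ℂ)) ^ (-(1/2) : ℂ)) *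
    Complex.exp ((Complex.I / (2 * (B : ℂ))) *
      ((A : ℂ) * (x : ℂ)^2 + 2 * (x : ℂ) * ((p : ℂ) - (ζ : ℂ))
        - 2 * (ζ : ℂ) * ((D : ℂ) * (p : ℂ) - (B : ℂ) * (q : ℂ))
        + (D : ℂ) * ((ζ : ℂ)^2 + (p : ℂ)^2)))

noncomputable def saft (A B D p q : ℝ) (f : ℝ → ℂ) (ζ : ℝ) : ℂ :=
  ∫ x : ℝ, f x * saftKernel A B D p q x ζ

noncomputable def ftransform (f : ℝ → ℂ) (ω : ℝ) : ℂ :=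
  (Real.sqrt (2 * Real.pi) : ℂ)⁻¹ * ∫ x : ℝ, f x * Complex.exp (-(Complex.I * (x : ℂ) * (ω : ℂ)))

section SincAux

open scoped FourierTransform Convolution
open Set intervalIntegral

lemma integral_cexp_box (r a : ℝ) (hr : 0 < r) :
    ∫ s in (-r)..r, Complex.exp (((-2 * π * a * s : ℝ) : ℂ) * Complex.I)
      = ((2 * r * _root_.sinc (2 * r * a) : ℝ) : ℂ) := by
  rcases eq_or_ne a 0 with rfl | ha
  · simp only [mul_zero, zero_mul, mul_comm]
    norm_num [_root_.sinc]
    push_cast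
    ring
  · have hc : ((-2 * π * a : ℝ) : ℂ) * Complex.I ≠ 0 := by
      simp [Complex.ext_iff, Real.pi_ne_zero, ha]
    have hcong : ∀ s ∈ Set.uIcc (-r) r,
        Complex.exp ((( -2 * π * a * s : ℝ) : ℂ) * Complex.I)
          = Complex.exp ((((-2 * π * a : ℝ) : ℂ) * Complex.I) * (s : ℂ)) := by
      intro s _; congr 1; push_cast; ring
    rw [intervalIntegral.integral_congr hcong, integral_exp_mul_complex hc]
    have h2 : (2 * r * a) ≠ 0 := by
      exact mul_ne_zero (by positivity) ha
    have hval : (2 * r * _root_.sinc (2 * r * a)) = Real.sin (2 * π * a * r) / (π * a) := by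
      rw [_root_.sinc, if_neg h2]
      have : π * (2 * r * a) ≠ 0 := mul_ne_zero Real.pi_ne_zero h2
      field_simp
    rw [hval, div_eq_iff hc]
    rw [show (((-2 * π * a : ℝ) : ℂ) * Complex.I) * (r : ℂ)
          = ((-(2 * π * a * r) : ℝ) : ℂ) * Complex.I by push_cast; ring,
        show (((-2 * π * a : ℝ) : ℂ) * Complex.I) * ((-r : ℝ) : ℂ)
          = (((2 * π * a * r) : ℝ) : ℂ) * Complex.I by push_cast; ring,
        Complex.exp_mul_I, Complex.exp_mul_I,
        ← Complex.ofReal_cos, ← Complex.ofReal_sin, ← Complex.ofReal_cos, ← Complex.ofReal_sin]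
    have hπa : (π * a) ≠ 0 := mul_ne_zero Real.pi_ne_zero ha
    have hπ' : (π:ℂ) ≠ 0 := Complex.ofReal_ne_zero.2 Real.pi_ne_zero
    have ha' : (a:ℂ) ≠ 0 := Complex.ofReal_ne_zero.2 ha
    push_cast
    field_simp
    rw [Complex.cos_neg, Complex.sin_neg]
    ring

noncomputable def fbox : ℝ → ℂ := Set.indicator (Set.Icc (-(1/2) : ℝ) (1/2)) (fun _ => 1)

noncomputable def hbox (n : ℤ) : ℝ → ℂ :=
  Set.indicator (Set.Icc (-1 : ℝ) 1)
    (fun s => (1/2) * Complex.exp (((π * n * s : ℝ) : ℂ) * Complex.I))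

lemma integrable_fbox : Integrable fbox := by
  rw [fbox, integrable_indicator_iff measurableSet_Icc]
  exact integrableOn_const measure_Icc_lt_top.ne

lemma integrable_hbox (n : ℤ) : Integrable (hbox n) := by
  rw [hbox, integrable_indicator_iff measurableSet_Icc]
  apply Continuous.integrableOn_Icc
  continuity

lemma fourier_fbox (x : ℝ) : (𝓕 fbox) x = ((_root_.sinc x : ℝ) : ℂ) := by
  rw [Real.fourier_real_eq_integral_exp_smul]
  have h1 : ∀ v : ℝ, Complex.exp (((-2 * π * v * x : ℝ) : ℂ) * Complex.I) • fbox v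
      = Set.indicator (Set.Icc (-(1/2) : ℝ) (1/2))
          (fun v => Complex.exp (((-2 * π * x * v : ℝ) : ℂ) * Complex.I)) v := by
    intro v
    rw [fbox]
    by_cases h : v ∈ Set.Icc (-(1/2) : ℝ) (1/2)
    · rw [Set.indicator_of_mem h, Set.indicator_of_mem h, smul_eq_mul, mul_one]
      congr 2
      push_cast
      ring
    · rw [Set.indicator_of_notMem h, Set.indicator_of_notMem h, smul_eq_mul, mul_zero]
  simp_rw [h1]
  rw [MeasureTheory.integral_indicator measurableSet_Icc, MeasureTheory.integral_Icc_eq_integral_Ioc,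
    ← intervalIntegral.integral_of_le (by norm_num : (-(1/2) : ℝ) ≤ 1/2)]
  have := integral_cexp_box (1/2) x (by norm_num)
  rw [show (-(1/2) : ℝ) = -(1/2 : ℝ) by norm_num] at *
  rw [this]
  norm_num

lemma fourier_hbox (n : ℤ) (x : ℝ) : (𝓕 (hbox n)) x = ((_root_.sinc (2 * x - n) : ℝ) : ℂ) := by
  rw [Real.fourier_real_eq_integral_exp_smul]
  have h1 : ∀ v : ℝ, Complex.exp (((-2 * π * v * x : ℝ) : ℂ) * Complex.I) • hbox n v
      = Set.indicator (Set.Icc (-1 : ℝ) 1)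
          (fun v => (1/2 : ℂ) * Complex.exp (((-2 * π * ((2 * x - n)/2) * v : ℝ) : ℂ) * Complex.I)) v := by
    intro v
    rw [hbox]
    by_cases h : v ∈ Set.Icc (-1 : ℝ) 1
    · rw [Set.indicator_of_mem h, Set.indicator_of_mem h, smul_eq_mul, ← mul_assoc,
        mul_comm _ (1/2 : ℂ), mul_assoc, ← Complex.exp_add]
      congr 2
      push_cast
      ring
    · simp [Set.indicator_of_notMem, h]
  simp_rw [h1]
  rw [MeasureTheory.integral_indicator measurableSet_Icc, MeasureTheory.integral_Icc_eq_integral_Ioc,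
    ← intervalIntegral.integral_of_le (by norm_num : (-1 : ℝ) ≤ 1),
    intervalIntegral.integral_const_mul, integral_cexp_box 1 ((2 * x - n)/2) (by norm_num)]
  rw [show 2 * (1:ℝ) * ((2 * x - n)/2) = 2 * x - n by ring]
  push_cast
  ring

lemma measurable_sinc : Measurable _root_.sinc := by
  unfold _root_.sinc
  exact Measurable.ite (measurableSet_eq) measurable_const
    ((Real.continuous_sin.comp (continuous_const.mul continuous_id)).measurable.div
      (continuous_const.mul continuous_id).measurable)

lemma abs_sinc_le_one (t : ℝ) : |_root_.sinc t| ≤ 1 := by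
  rcases eq_or_ne t 0 with rfl | ht
  · simp [_root_.sinc]
  · rw [_root_.sinc, if_neg ht, abs_div]
    rw [div_le_one (by positivity : (0:ℝ) < |π * t|)]
    exact Real.abs_sin_le_abs

lemma abs_sinc_le (t : ℝ) (ht : t ≠ 0) : |_root_.sinc t| ≤ (π * |t|)⁻¹ := by
  rw [_root_.sinc, if_neg ht, abs_div]
  have h1 : |π * t| = π * |t| := by
    rw [abs_mul, abs_of_pos Real.pi_pos]
  rw [h1, div_le_iff₀ (by positivity), inv_mul_cancel₀ (by positivity : (π : ℝ) * |t| ≠ 0)]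
  exact Real.abs_sin_le_one _

lemma integrable_sinc_prod (n : ℤ) :
    Integrable (fun x => _root_.sinc x * _root_.sinc (2 * x - n)) := by
  set R : ℝ := |(n:ℝ)| + 1 with hR
  have hR1 : 1 ≤ R := by rw [hR]; linarith [abs_nonneg ((n:ℝ))]
  set C : ℝ := 1 + R ^ 2 with hC
  have hC2 : 2 ≤ C := by nlinarith
  apply Integrable.mono' ((integrable_inv_one_add_sq).const_mul C)
  · exact (_root_.measurable_sinc.mul (_root_.measurable_sinc.comp (by fun_prop))).aestronglyMeasurable
  · filter_upwards with x
    rw [Real.norm_eq_abs, abs_mul]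
    rcases le_or_gt |x| R with hx | hx
    · have h1 : |_root_.sinc x| * |_root_.sinc (2 * x - n)| ≤ 1 :=
        mul_le_one₀ (abs_sinc_le_one x) (abs_nonneg _) (abs_sinc_le_one _)
      have h2 : (1:ℝ) ≤ C * (1 + x ^ 2)⁻¹ := by
        rw [le_mul_inv_iff₀ (by positivity), one_mul]
        nlinarith [abs_nonneg x, _root_.sq_abs x, sq_le_sq' (neg_le_of_abs_le hx) (le_of_abs_le hx)]
      linarith
    · have hx0 : x ≠ 0 := by
        intro h; rw [h] at hx; simp at hx; linarith
      have hxn : |x| ≥ |(n:ℝ)| := by simp only [hR] at hx; linarith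
      have h2x : |2 * x - n| ≥ |x| := by
        have h3 := abs_sub_abs_le_abs_sub (2 * x) (n:ℝ)
        rw [abs_mul, _root_.abs_two] at h3
        linarith
      have h2x0 : 2 * x - n ≠ 0 := by
        intro h
        rw [h] at h2x
        simp only [abs_zero] at h2x
        exact hx0 (abs_eq_zero.mp (le_antisymm h2x (abs_nonneg x)))
      have hb1 := abs_sinc_le x hx0
      have hb2 := abs_sinc_le _ h2x0
      have hb2' : |_root_.sinc (2 * x - n)| ≤ (π * |x|)⁻¹ := by
        refine hb2.trans ?_
        apply inv_anti₀ (by positivity)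
        have := Real.pi_pos
        nlinarith
      have hπ : (1:ℝ) ≤ π := by linarith [Real.pi_gt_three]
      have hxpos : 0 < |x| := abs_pos.mpr hx0
      have key : |_root_.sinc x| * |_root_.sinc (2 * x - n)| ≤ (x ^ 2)⁻¹ := by
        calc |_root_.sinc x| * |_root_.sinc (2 * x - n)| ≤ (π * |x|)⁻¹ * (π * |x|)⁻¹ :=
              mul_le_mul hb1 hb2' (abs_nonneg _) (by positivity)
        _ ≤ (x ^ 2)⁻¹ := by
            rw [← mul_inv]
            apply inv_anti₀ (by positivity)
            have hxx : |x| ≤ π * |x| := le_mul_of_one_le_left (abs_nonneg x) hπ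
            nlinarith [_root_.sq_abs x]
      refine key.trans ?_
      have hx1 : 1 ≤ x ^ 2 := by nlinarith [_root_.sq_abs x]
      rw [le_mul_inv_iff₀ (by positivity), inv_mul_eq_div, div_le_iff₀ (by positivity)]
      nlinarith

noncomputable def wfun (n : ℤ) : ℝ → ℂ :=
  MeasureTheory.convolution fbox (hbox n) (ContinuousLinearMap.mul ℝ ℂ) volume

lemma integrable_wfun (n : ℤ) : Integrable (wfun n) :=
  integrable_fbox.integrable_convolution (ContinuousLinearMap.mul ℝ ℂ) (integrable_hbox n)

lemma wfun_apply (n : ℤ) (t : ℝ) : wfun n t = ∫ s, fbox s * hbox n (t - s) := by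
  simp [wfun, MeasureTheory.convolution_def]

lemma wfun_eq (n : ℤ) {t : ℝ} (ht : |t| ≤ 1/2) :
    wfun n t = Complex.exp (((π * n * t : ℝ) : ℂ) * Complex.I)
      * ((1/2 * _root_.sinc ((n : ℝ)/2) : ℝ) : ℂ) := by
  rw [wfun_apply]
  have h1 : ∀ s : ℝ, fbox s * hbox n (t - s)
      = Set.indicator (Set.Icc (-(1/2) : ℝ) (1/2))
          (fun s => Complex.exp (((π * n * t : ℝ) : ℂ) * Complex.I) *
            ((1/2 : ℂ) * Complex.exp (((-2 * π * ((n:ℝ)/2) * s : ℝ) : ℂ) * Complex.I))) s := by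
    intro s
    rw [fbox]
    by_cases h : s ∈ Set.Icc (-(1/2) : ℝ) (1/2)
    · rw [Set.indicator_of_mem h, Set.indicator_of_mem h, one_mul]
      have hmem : t - s ∈ Set.Icc (-1 : ℝ) 1 := by
        obtain ⟨h1, h2⟩ := h
        rw [Set.mem_Icc]
        constructor <;> [nlinarith [abs_le.mp ht]; nlinarith [abs_le.mp ht]]
      rw [hbox, Set.indicator_of_mem hmem]
      have hsplit : (((π * (n:ℝ) * (t - s) : ℝ)) : ℂ) * Complex.I
          = ((π * (n:ℝ) * t : ℝ) : ℂ) * Complex.I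
            + ((-2 * π * ((n:ℝ)/2) * s : ℝ) : ℂ) * Complex.I := by
        push_cast; ring
      rw [hsplit, Complex.exp_add]
      ring
    · rw [Set.indicator_of_notMem h, Set.indicator_of_notMem h, zero_mul]
  simp_rw [h1]
  rw [MeasureTheory.integral_indicator measurableSet_Icc,
    MeasureTheory.integral_Icc_eq_integral_Ioc,
    ← intervalIntegral.integral_of_le (by norm_num : (-(1/2) : ℝ) ≤ 1/2),
    intervalIntegral.integral_const_mul, intervalIntegral.integral_const_mul,
    integral_cexp_box (1/2) ((n:ℝ)/2) (by norm_num)]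
  rw [show 2 * (1/2 : ℝ) * ((n:ℝ)/2) = (n:ℝ)/2 by ring]
  push_cast
  ring

lemma continuousAt_wfun (n : ℤ) : ContinuousAt (wfun n) 0 := by
  have hev : (fun t => Complex.exp (((π * n * t : ℝ) : ℂ) * Complex.I)
      * ((1/2 * _root_.sinc ((n : ℝ)/2) : ℝ) : ℂ)) =ᶠ[nhds (0:ℝ)] wfun n := by
    filter_upwards [Metric.ball_mem_nhds (0:ℝ) (by norm_num : (0:ℝ) < 1/2)] with t ht
    rw [Metric.mem_ball, Real.dist_eq, sub_zero] at ht
    exact (wfun_eq n ht.le).symm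
  apply ContinuousAt.congr _ hev
  apply ContinuousAt.mul _ continuousAt_const
  apply Continuous.continuousAt
  fun_prop

lemma wfun_zero (n : ℤ) : wfun n 0 = ((1/2 * _root_.sinc ((n : ℝ)/2) : ℝ) : ℂ) := by
  rw [wfun_eq n (by norm_num : |(0:ℝ)| ≤ 1/2)]
  norm_num

lemma fourier_conv (n : ℤ) (x : ℝ) :
    (𝓕 (wfun n)) x = (𝓕 fbox) x * (𝓕 (hbox n)) x := by
  have hb : Integrable (fun p : ℝ × ℝ => fbox p.2 * hbox n (p.1 - p.2))
      (volume.prod volume) := by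
    have base := integrable_fbox.convolution_integrand (ContinuousLinearMap.mul ℝ ℂ)
      (integrable_hbox n)
    simpa using base
  have hint : Integrable (fun p : ℝ × ℝ =>
      Complex.exp (((-2 * π * p.1 * x : ℝ) : ℂ) * Complex.I)
        * (fbox p.2 * hbox n (p.1 - p.2))) (volume.prod volume) := by
    refine hb.norm.mono' ?_ ?_
    · exact ((Complex.continuous_exp.comp (by fun_prop)).aestronglyMeasurable).mul
        hb.aestronglyMeasurable
    · filter_upwards with p
      rw [norm_mul, Complex.norm_exp_ofReal_mul_I,
        one_mul]
  rw [Real.fourier_real_eq_integral_exp_smul]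
  calc ∫ t : ℝ, Complex.exp (((-2 * π * t * x : ℝ) : ℂ) * Complex.I) • wfun n t
      = ∫ t : ℝ, ∫ s : ℝ, Complex.exp (((-2 * π * t * x : ℝ) : ℂ) * Complex.I)
          * (fbox s * hbox n (t - s)) := by
        congr 1; funext t
        rw [wfun_apply, smul_eq_mul, MeasureTheory.integral_const_mul]
    _ = ∫ s : ℝ, ∫ t : ℝ, Complex.exp (((-2 * π * t * x : ℝ) : ℂ) * Complex.I)
          * (fbox s * hbox n (t - s)) := MeasureTheory.integral_integral_swap hint
    _ = ∫ s : ℝ, (Complex.exp (((-2 * π * s * x : ℝ) : ℂ) * Complex.I) * fbox s)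
          * ∫ t : ℝ, Complex.exp (((-2 * π * t * x : ℝ) : ℂ) * Complex.I) * hbox n t := by
        congr 1; funext s
        rw [← MeasureTheory.integral_const_mul, ← MeasureTheory.integral_add_right_eq_self
          (fun t => Complex.exp (((-2 * π * t * x : ℝ) : ℂ) * Complex.I)
            * (fbox s * hbox n (t - s))) s]
        congr 1; funext t
        rw [add_sub_cancel_right]
        have hE : Complex.exp (((-2 * π * (t + s) * x : ℝ) : ℂ) * Complex.I)
            = Complex.exp (((-2 * π * t * x : ℝ) : ℂ) * Complex.I)
              * Complex.exp (((-2 * π * s * x : ℝ) : ℂ) * Complex.I) := by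
          rw [← Complex.exp_add]; congr 1; push_cast; ring
        rw [hE]; ring
    _ = (𝓕 fbox) x * (𝓕 (hbox n)) x := by
        rw [MeasureTheory.integral_mul_const, Real.fourier_real_eq_integral_exp_smul,
          Real.fourier_real_eq_integral_exp_smul]
        simp_rw [smul_eq_mul]
  rfl

lemma sinc_inner_aux (n : ℤ) :
    ∫ x : ℝ, _root_.sinc x * _root_.sinc (2 * x - n) = (1 / 2) * _root_.sinc ((n : ℝ) / 2) := by
  have hFw : 𝓕 (wfun n) = fun x => ((_root_.sinc x * _root_.sinc (2 * x - (n:ℝ)) : ℝ) : ℂ) := by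
    funext x
    rw [fourier_conv, fourier_fbox, fourier_hbox]
    push_cast
    ring
  have hFint : Integrable (𝓕 (wfun n)) := by
    rw [hFw]
    exact (integrable_sinc_prod n).ofReal
  have hinv := (integrable_wfun n).fourierInv_fourier_eq hFint (continuousAt_wfun n)
  rw [wfun_zero] at hinv
  have hL : 𝓕⁻ (𝓕 (wfun n)) 0 = ((∫ x : ℝ, _root_.sinc x * _root_.sinc (2 * x - (n:ℝ)) : ℝ) : ℂ) := by
    rw [Real.fourierInv_eq_fourier_neg, neg_zero,
      Real.fourier_real_eq_integral_exp_smul]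
    simp only [mul_zero, Complex.ofReal_zero, zero_mul, Complex.exp_zero, one_smul]
    rw [hFw]
    exact _root_.integral_ofReal
  rw [hL] at hinv
  exact_mod_cast hinv

end SincAux

/-- `∫ _root_.sinc(x) _root_.sinc(2x−n) dx = (1/2) _root_.sinc(n/2)` for every integer `n`. -/
theorem sinc_dilated_translate_inner_product (n : ℤ) :
    ∫ x : ℝ, _root_.sinc x * _root_.sinc (2 * x - n) = (1 / 2) * _root_.sinc ((n : ℝ) / 2) :=
  sinc_inner_aux n
end

section
/- Scale-invariance characterization of the SAFT multiresolution spaces: with V_S^k = {f ∈ L²(ℝ) : O_S[f](ζ) = 0 a.e. |ζ| ≥ 2^k Bπ}, a function f belongs to V_S^0 if and only if the function x ↦ exp{(i/2B)(3Ax² + 2xp)}·f(2x) belongs to V_S^1. -/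
open MeasureTheory Real Complex

lemma saft_chirp_scale (A B D p q : ℝ) (hB : (B : ℂ) ≠ 0) (f : ℝ → ℂ) (ζ : ℝ) :
    saft A B D p q
        (fun x : ℝ => Complex.exp ((Complex.I / (2 * (B : ℂ))) *
            (3 * (A : ℂ) * (x : ℂ)^2 + 2 * (x : ℂ) * (p : ℂ))) * f (2 * x)) ζ
      = (1/2 : ℂ) * Complex.exp ((Complex.I / (2 * (B : ℂ))) *
          (-(ζ : ℂ) * ((D : ℂ) * (p : ℂ) - (B : ℂ) * (q : ℂ)) + (3/4 : ℂ) * (D : ℂ) * (ζ : ℂ)^2))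
          * saft A B D p q f (ζ / 2) := by
  unfold saft
  have hpt : ∀ x : ℝ,
      (Complex.exp ((Complex.I / (2 * (B : ℂ))) *
          (3 * (A : ℂ) * (x : ℂ)^2 + 2 * (x : ℂ) * (p : ℂ))) * f (2 * x))
        * saftKernel A B D p q x ζ
      = Complex.exp ((Complex.I / (2 * (B : ℂ))) *
          (-(ζ : ℂ) * ((D : ℂ) * (p : ℂ) - (B : ℂ) * (q : ℂ)) + (3/4 : ℂ) * (D : ℂ) * (ζ : ℂ)^2))
        * (f (2 * x) * saftKernel A B D p q (2 * x) (ζ / 2)) := by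
    intro x
    unfold saftKernel
    push_cast
    rw [show ∀ (a b c : ℂ) (N : ℂ),
        Complex.exp a * b * (N * Complex.exp c) = (Complex.exp a * Complex.exp c) * (b * N)
        from fun a b c N => by ring,
      show ∀ (a b c : ℂ) (N : ℂ),
        Complex.exp a * (b * (N * Complex.exp c)) = (Complex.exp a * Complex.exp c) * (b * N)
        from fun a b c N => by ring, ← Complex.exp_add, ← Complex.exp_add]
    congr 2
    field_simp
    ring
  simp_rw [hpt]
  rw [integral_const_mul]
  have := MeasureTheory.Measure.integral_comp_mul_left
    (fun y : ℝ => f y * saftKernel A B D p q y (ζ / 2)) 2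
  simp only [this]
  rw [show |(2 : ℝ)⁻¹| = (2 : ℝ)⁻¹ by norm_num]
  rw [Complex.real_smul]
  push_cast
  ring

lemma qmp_mul (c : ℝ) (hc : c ≠ 0) :
    Measure.QuasiMeasurePreserving (fun x : ℝ => c * x) volume volume := by
  refine ⟨(measurable_const_mul c), ?_⟩
  rw [Real.map_volume_mul_left hc]
  exact Measure.smul_absolutelyContinuous

/-- `f ∈ V_S^0` iff `x ↦ e^{(i/2B)(3Ax²+2xp)} f(2x) ∈ V_S^1`. -/
theorem saft_mra_scale_invariance
    (A B C D p q : ℝ) (hdet : A * D - B * C = 1) (hB : 0 < B)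
    (f : ℝ → ℂ) (hf : MemLp f 2 (volume : Measure ℝ)) :
    (∀ᵐ ζ : ℝ, B * Real.pi ≤ |ζ| → saft A B D p q f ζ = 0) ↔
      (∀ᵐ ζ : ℝ, 2 * B * Real.pi ≤ |ζ| →
        saft A B D p q
          (fun x : ℝ => Complex.exp ((Complex.I / (2 * (B : ℂ))) *
              (3 * (A : ℂ) * (x : ℂ)^2 + 2 * (x : ℂ) * (p : ℂ))) * f (2 * x)) ζ = 0) := by
  have hBC : (B : ℂ) ≠ 0 := by exact_mod_cast hB.ne'
  constructor
  · intro h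
    have h2 : ∀ᵐ ζ : ℝ, B * Real.pi ≤ |(1/2 : ℝ) * ζ| → saft A B D p q f ((1/2 : ℝ) * ζ) = 0 :=
      (qmp_mul (1/2) (by norm_num)).ae h
    filter_upwards [h2] with ζ hζ hle
    rw [saft_chirp_scale A B D p q hBC f ζ]
    have : saft A B D p q f (ζ / 2) = 0 := by
      have : B * Real.pi ≤ |(1/2 : ℝ) * ζ| := by
        rw [abs_mul]
        rw [show |(1/2 : ℝ)| = 1/2 by norm_num]
        linarith
      simpa [div_eq_mul_inv, mul_comm] using hζ this
    rw [show ζ / 2 = (1/2 : ℝ) * ζ by ring] at this ⊢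
    rw [this, mul_zero]
  · intro h
    have h2 : ∀ᵐ ζ : ℝ, 2 * B * Real.pi ≤ |(2 : ℝ) * ζ| →
        saft A B D p q
          (fun x : ℝ => Complex.exp ((Complex.I / (2 * (B : ℂ))) *
              (3 * (A : ℂ) * (x : ℂ)^2 + 2 * (x : ℂ) * (p : ℂ))) * f (2 * x)) ((2:ℝ) * ζ) = 0 :=
      (qmp_mul 2 (by norm_num)).ae h
    filter_upwards [h2] with ζ hζ hle
    have habs : 2 * B * Real.pi ≤ |(2 : ℝ) * ζ| := by
      rw [abs_mul, show |(2 : ℝ)| = 2 by norm_num]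
      linarith
    have hz := hζ habs
    rw [saft_chirp_scale A B D p q hBC f (2 * ζ)] at hz
    rw [show (2 : ℝ) * ζ / 2 = ζ by ring] at hz
    have hE := Complex.exp_ne_zero ((Complex.I / (2 * (B : ℂ))) *
      (-((2 * ζ : ℝ) : ℂ) * ((D : ℂ) * (p : ℂ) - (B : ℂ) * (q : ℂ))
        + (3/4 : ℂ) * (D : ℂ) * ((2 * ζ : ℝ) : ℂ)^2))
    have := mul_eq_zero.mp hz
    rcases this with h' | h'
    · rcases mul_eq_zero.mp h' with h'' | h''
      · norm_num at h''
      · exact absurd h'' hE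
    · exact h'
end
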